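/- If A, B are positive self-adjoint operators from X to X* with positive lower bounds, and E is a bounded operator on X satisfying E* A ⊆ A E, E(dom A) ⊆ dom A, E* B ⊆ B E, E(dom B) ⊆ dom B, then E* (A ∔ B) ⊆ (A ∔ B) E, where A ∔ B is the form sum. -/

import Mathlib

open scoped ComplexConjugate ComplexOrder InnerProductSpace
noncomputable section

/-- The conjugate dual of a complex normed space: continuous conjugate-linear
functionals. Pairing `(v, x) := v x`. -/
abbrev CDual (X : Type*) [NormedAddCommGroup X] [NormedSpace ℂ X] :=
  X →SL[starRingEnd ℂ] ℂ


/-- A densely defined operator `A : X → X*` is self-adjoint (`A = A*`):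
it is densely defined, symmetric (`(Ax,y) = (x,Ay)` i.e. `A ⊆ A*`), and maximal
(any `y` for which `x ↦ (Ax,y)` is represented by some `w ∈ X*` lies in `dom A`
with `Ay = w`, i.e. `A* ⊆ A`). -/
def IsSelfAdjointOp {X : Type*} [NormedAddCommGroup X] [NormedSpace ℂ X]
    (A : X →ₗ.[ℂ] CDual X) : Prop :=
  Dense (A.domain : Set X) ∧
  (∀ x y : A.domain, A x (y : X) = starRingEnd ℂ (A y (x : X))) ∧
  (∀ (y : X) (w : CDual X),
    (∀ x : A.domain, A x y = starRingEnd ℂ (w (x : X))) →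
      ∃ hy : y ∈ A.domain, A ⟨y, hy⟩ = w)

/-- `(Ax, x) ≥ 0` for all `x ∈ dom A` (using the complex order). -/
def IsPositiveOp {X : Type*} [NormedAddCommGroup X] [NormedSpace ℂ X]
    (A : X →ₗ.[ℂ] CDual X) : Prop :=
  ∀ x : A.domain, 0 ≤ A x (x : X)


lemma inner_zero_of_dense {H : Type*} [NormedAddCommGroup H] [InnerProductSpace ℂ H]
    {s : Set H} (hs : Dense s) {d : H} (h : ∀ v ∈ s, ⟪d, v⟫_ℂ = 0) : d = 0 := by
  have hfun : (fun v : H => ⟪d, v⟫_ℂ) = fun _ => (0 : ℂ) := by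
    refine Continuous.ext_on hs (continuous_const.inner continuous_id) continuous_const ?_
    exact fun v hv => h v hv
  have := congrFun hfun d
  simpa [inner_self_eq_zero] using this

set_option maxHeartbeats 1000000 in
lemma aux_key {X : Type*} [NormedAddCommGroup X] [NormedSpace ℂ X]
    {H : Type*} [NormedAddCommGroup H] [InnerProductSpace ℂ H] [CompleteSpace H]
    (A : X →ₗ.[ℂ] CDual X)
    (γ : ℝ) (hγ : 0 < γ)
    (hlb : ∀ x : A.domain, (↑(γ * ‖(x : X)‖ ^ 2) : ℂ) ≤ A x (x : X))
    (Φ : A.domain → H) (hΦdense : DenseRange Φ)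
    (hΦ : ∀ x y : A.domain, ⟪Φ y, Φ x⟫_ℂ = A x (y : X))
    (J : H →ₗ.[ℂ] CDual X)
    (hJdom : ∀ h : H, h ∈ J.domain ↔ h ∈ Set.range Φ)
    (hJval : ∀ (x : A.domain) (hh : Φ x ∈ J.domain), J ⟨Φ x, hh⟩ = A x)
    (S : X →ₗ.[ℂ] H)
    (hSdom : ∀ y : X, y ∈ S.domain ↔
      ∃ k : H, ∀ h : J.domain, J h y = ⟪k, (h : H)⟫_ℂ)
    (hSval : ∀ (y : S.domain) (h : J.domain), J h (y : X) = ⟪S y, (h : H)⟫_ℂ)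
    (E : X →L[ℂ] X)
    (hinv : ∀ x : A.domain, E (x : X) ∈ A.domain)
    (hcomm : ∀ (x : A.domain) (y : X), A x (E y) = A ⟨E (x : X), hinv x⟩ y) :
    ∃ g : S.domain → S.domain, (∀ y : S.domain, ((g y : X)) = E (y : X)) ∧
      (∀ y z : S.domain, ⟪S (g y), S z⟫_ℂ = ⟪S y, S (g z)⟫_ℂ) := by
  classical
  -- the restriction of E to the domain of A
  set Ed : A.domain →ₗ[ℂ] A.domain :=
    { toFun := fun x => ⟨E (x : X), hinv x⟩
      map_add' := by intro x y; ext; simp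
      map_smul' := by intro c x; ext; simp } with hEd
  have hEdcoe : ∀ x : A.domain, ((Ed x : X)) = E (x : X) := fun x => rfl
  have hcomm' : ∀ (x : A.domain) (y : X), A (Ed x) y = A x (E y) := by
    intro x y; rw [hcomm x y]; rfl
  -- norm of Φ z squared
  have hnormsq : ∀ z : A.domain, ((‖Φ z‖ : ℂ)) ^ 2 = A z (z : X) := by
    intro z; rw [← hΦ z z, inner_self_eq_norm_sq_to_K]; norm_cast
  have hlb' : ∀ z : A.domain, γ * ‖(z : X)‖ ^ 2 ≤ ‖Φ z‖ ^ 2 := by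
    intro z
    have h1 := hlb z
    rw [← hnormsq z] at h1
    have : ((γ * ‖(z : X)‖ ^ 2 : ℝ) : ℂ) ≤ ((‖Φ z‖ ^ 2 : ℝ) : ℂ) := by
      simpa using h1
    exact_mod_cast this
  -- Φ is injective-ish: Φ z = 0 → z = 0
  have hΦzero : ∀ z : A.domain, Φ z = 0 → z = 0 := by
    intro z hz
    have := hlb' z
    rw [hz, norm_zero] at this
    have hzn : ‖(z : X)‖ ^ 2 ≤ 0 := by nlinarith
    have : ‖(z : X)‖ = 0 := by nlinarith [sq_nonneg ‖(z : X)‖, norm_nonneg (z : X)]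
    ext
    simpa using this
  have key : ∀ d : H, (∀ x : A.domain, ⟪d, Φ x⟫_ℂ = 0) → d = 0 := by
    intro d hd
    refine inner_zero_of_dense hΦdense ?_
    rintro v ⟨x, rfl⟩
    exact hd x
  -- Φ is ℂ-linear
  have Φadd : ∀ u v : A.domain, Φ (u + v) = Φ u + Φ v := by
    intro u v
    have h0 : Φ (u + v) - (Φ u + Φ v) = 0 := by
      apply key
      intro x
      rw [inner_sub_left, inner_add_left, hΦ x (u + v), hΦ x u, hΦ x v]
      push_cast [Submodule.coe_add]
      rw [map_add]
      ring
    linear_combination (norm := module) h0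
  have Φsmul : ∀ (c : ℂ) (u : A.domain), Φ (c • u) = c • Φ u := by
    intro c u
    have h0 : Φ (c • u) - c • Φ u = 0 := by
      apply key
      intro x
      rw [inner_sub_left, inner_smul_left, hΦ x (c • u), hΦ x u]
      push_cast [Submodule.coe_smul]
      rw [map_smulₛₗ]
      simp [smul_eq_mul]
    linear_combination (norm := module) h0
  set φ : A.domain →ₗ[ℂ] H :=
    { toFun := Φ
      map_add' := Φadd
      map_smul' := Φsmul } with hφ
  have hφinj : Function.Injective φ := by
    intro u v huv
    have : φ (u - v) = 0 := by rw [map_sub, huv, sub_self]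
    have := hΦzero (u - v) this
    rwa [sub_eq_zero] at this
  -- the key norm bound
  have hbound : ∀ x : A.domain, ‖Φ (Ed x)‖ ≤ ‖E‖ * ‖Φ x‖ := by
    intro x
    set e : ℕ → A.domain := fun n => (fun z => Ed z)^[n] x with he
    have he0 : e 0 = x := rfl
    have hesucc : ∀ n, e (n + 1) = Ed (e n) := by
      intro n; simp only [he, Function.iterate_succ_apply']
    have hAshift : ∀ z w : A.domain, (A (Ed z)) (w : X) = (A z) ((Ed w : X)) := by
      intro z w
      rw [hcomm' z (w : X)]
      rfl
    have hAx : ∀ n m : ℕ, (A (e n)) ((e m : X)) = (A x) ((e (n + m) : X)) := by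
      intro n
      induction n with
      | zero => intro m; rw [he0]; norm_num
      | succ k ih =>
        intro m
        rw [hesucc k, hAshift (e k) (e m), ← hesucc m, ih (m + 1)]
        have hnm : k + (m + 1) = k + 1 + m := by omega
        rw [hnm]
    set a : ℕ → ℝ := fun n => ‖Φ (e n)‖ with ha
    have hanonneg : ∀ n, 0 ≤ a n := fun n => norm_nonneg _
    have hasq : ∀ n, ((a n : ℂ)) ^ 2 = (A x) ((e (n + n) : X)) := by
      intro n
      rw [ha]
      simp only
      rw [hnormsq (e n), hAx n n]
    -- growth bound
    have hecoe_norm : ∀ n, ‖((e n : A.domain) : X)‖ ≤ ‖E‖ ^ n * ‖(x : X)‖ := by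
      intro n
      induction n with
      | zero => simp [he0]
      | succ k ih =>
        rw [hesucc k]
        calc ‖((Ed (e k) : A.domain) : X)‖ = ‖E ((e k : A.domain) : X)‖ := by rw [hEdcoe]
        _ ≤ ‖E‖ * ‖((e k : A.domain) : X)‖ := E.le_opNorm _
        _ ≤ ‖E‖ * (‖E‖ ^ k * ‖(x : X)‖) :=
            mul_le_mul_of_nonneg_left ih (norm_nonneg E)
        _ = ‖E‖ ^ (k + 1) * ‖(x : X)‖ := by ring
    have hgrowth : ∀ n, a n ^ 2 ≤ (‖A x‖ * ‖(x : X)‖) * ‖E‖ ^ (n + n) := by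
      intro n
      have h1 : a n ^ 2 = ‖((a n : ℂ)) ^ 2‖ := by
        rw [norm_pow, Complex.norm_real, Real.norm_of_nonneg (hanonneg n)]
      rw [h1, hasq n]
      calc ‖(A x) ((e (n + n) : X))‖ ≤ ‖A x‖ * ‖((e (n + n) : A.domain) : X)‖ :=
            (A x).le_opNorm _
      _ ≤ ‖A x‖ * (‖E‖ ^ (n + n) * ‖(x : X)‖) :=
            mul_le_mul_of_nonneg_left (hecoe_norm (n + n)) (norm_nonneg _)
      _ = (‖A x‖ * ‖(x : X)‖) * ‖E‖ ^ (n + n) := by ring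
    -- log-convexity
    have hconv : ∀ n, a (n + 1) ^ 2 ≤ a n * a (n + 2) := by
      intro n
      have h1 : ((a (n + 1) : ℂ)) ^ 2 = ⟪Φ (e n), Φ (e (n + 2))⟫_ℂ := by
        have hnm : (n + 1) + (n + 1) = (n + 2) + n := by omega
        rw [hasq (n + 1), hnm, ← hAx (n + 2) n, ← hΦ (e (n + 2)) (e n)]
      have h2 : a (n + 1) ^ 2 = ‖⟪Φ (e n), Φ (e (n + 2))⟫_ℂ‖ := by
        rw [← h1, norm_pow, Complex.norm_real, Real.norm_of_nonneg (hanonneg (n + 1))]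
      rw [h2]
      exact norm_inner_le_norm _ _
    -- final contradiction argument
    by_contra hcon
    push_neg at hcon
    have ha1pos : 0 < a 1 := by
      have : 0 ≤ ‖E‖ * ‖Φ x‖ := mul_nonneg (norm_nonneg _) (norm_nonneg _)
      calc (0:ℝ) ≤ ‖E‖ * ‖Φ x‖ := this
      _ < a 1 := by simpa [ha, hesucc 0, he0] using hcon
    have ha0pos : 0 < a 0 := by
      rcases lt_or_eq_of_le (hanonneg 0) with h | h
      · exact h
      · exfalso
        have hx0 : x = 0 := by
          apply hΦzero
          have : ‖Φ x‖ = 0 := by simpa [ha, he0] using h.symm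
          simpa [norm_eq_zero] using this
        have : a 1 = 0 := by
          have h1 : e 1 = 0 := by rw [hesucc 0, he0, hx0]; exact map_zero Ed
          have h2 : Φ (0 : A.domain) = 0 := map_zero φ
          simp [ha, h1, h2]
        exact absurd this (ne_of_gt ha1pos)
    have hapos : ∀ n, 0 < a (n + 1) := by
      intro n
      induction n with
      | zero => exact ha1pos
      | succ k ih =>
        rcases lt_or_eq_of_le (hanonneg (k + 2)) with h | h
        · exact h
        · exfalso
          have := hconv k
          rw [← h] at this
          nlinarith [hanonneg k, ih]
    have hchain : ∀ n, a 1 * a n ≤ a 0 * a (n + 1) := by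
      intro n
      induction n with
      | zero => ring_nf; exact le_rfl
      | succ k ih =>
        have h1 := hconv k
        have h2 := hapos k
        have h3 : a 1 * a (k + 1) * a (k + 1) ≤ a 0 * a (k + 2) * a (k + 1) := by
          calc a 1 * a (k + 1) * a (k + 1) = a 1 * (a (k + 1) ^ 2) := by ring
          _ ≤ a 1 * (a k * a (k + 2)) := mul_le_mul_of_nonneg_left h1 (hanonneg 1)
          _ = (a 1 * a k) * a (k + 2) := by ring
          _ ≤ (a 0 * a (k + 1)) * a (k + 2) :=
              mul_le_mul_of_nonneg_right ih (hanonneg (k + 2))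
          _ = a 0 * a (k + 2) * a (k + 1) := by ring
        exact le_of_mul_le_mul_right h3 h2
    have hpow : ∀ n, a 1 ^ n * a 0 ≤ a n * a 0 ^ n := by
      intro n
      induction n with
      | zero => rw [pow_zero, pow_zero, one_mul, mul_one]
      | succ k ih =>
        calc a 1 ^ (k + 1) * a 0 = a 1 * (a 1 ^ k * a 0) := by ring
        _ ≤ a 1 * (a k * a 0 ^ k) := mul_le_mul_of_nonneg_left ih (le_of_lt ha1pos)
        _ = (a 1 * a k) * a 0 ^ k := by ring
        _ ≤ (a 0 * a (k + 1)) * a 0 ^ k :=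
            mul_le_mul_of_nonneg_right (hchain k) (pow_nonneg (hanonneg 0) k)
        _ = a (k + 1) * a 0 ^ (k + 1) := by ring
    -- combine
    set c : ℝ := ‖E‖ with hc
    set K : ℝ := ‖A x‖ * ‖(x : X)‖ with hK
    have hKnonneg : 0 ≤ K := mul_nonneg (norm_nonneg _) (norm_nonneg _)
    have hca0 : c * a 0 < a 1 := hcon
    have hfinal : ∀ n, a 0 ^ 2 ≤ K * ((c * a 0) ^ 2 / a 1 ^ 2) ^ n := by
      intro n
      have h1 : (a 1 ^ n * a 0) ^ 2 ≤ (a n * a 0 ^ n) ^ 2 := by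
        have := hpow n
        nlinarith [mul_nonneg (pow_nonneg (hanonneg 1) n) (hanonneg 0)]
      have h2 : a n ^ 2 ≤ K * c ^ (n + n) := hgrowth n
      have h3 : (a 1 ^ 2) ^ n * a 0 ^ 2 ≤ (K * c ^ (n + n)) * (a 0 ^ 2) ^ n := by
        calc (a 1 ^ 2) ^ n * a 0 ^ 2 = (a 1 ^ n * a 0) ^ 2 := by ring
        _ ≤ (a n * a 0 ^ n) ^ 2 := h1
        _ = a n ^ 2 * (a 0 ^ 2) ^ n := by ring
        _ ≤ (K * c ^ (n + n)) * (a 0 ^ 2) ^ n :=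
            mul_le_mul_of_nonneg_right h2 (pow_nonneg (sq_nonneg _) n)
      have ha1sqpos : 0 < (a 1 ^ 2) ^ n := pow_pos (pow_pos ha1pos 2) n
      have h4 : a 0 ^ 2 ≤ (K * c ^ (n + n)) * (a 0 ^ 2) ^ n / (a 1 ^ 2) ^ n := by
        rw [le_div_iff₀ ha1sqpos]
        calc a 0 ^ 2 * (a 1 ^ 2) ^ n = (a 1 ^ 2) ^ n * a 0 ^ 2 := by ring
        _ ≤ _ := h3
      calc a 0 ^ 2 ≤ (K * c ^ (n + n)) * (a 0 ^ 2) ^ n / (a 1 ^ 2) ^ n := h4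
      _ = K * ((c * a 0) ^ 2 / a 1 ^ 2) ^ n := by
          rw [div_pow, mul_pow]
          field_simp
          ring
    set r : ℝ := (c * a 0) ^ 2 / a 1 ^ 2 with hr
    have hr0 : 0 ≤ r := div_nonneg (sq_nonneg _) (sq_nonneg _)
    have hr1 : r < 1 := by
      rw [hr, div_lt_one (pow_pos ha1pos 2)]
      have hca0' : 0 ≤ c * a 0 := mul_nonneg (norm_nonneg _) (hanonneg 0)
      nlinarith
    have htend : Filter.Tendsto (fun n => K * r ^ n) Filter.atTop (nhds 0) := by
      have := tendsto_pow_atTop_nhds_zero_of_lt_one hr0 hr1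
      simpa using this.const_mul K
    have hle : a 0 ^ 2 ≤ 0 := ge_of_tendsto htend (Filter.Eventually.of_forall hfinal)
    nlinarith
  -- symmetry of the commutator on the range of Φ
  have hsymΦ : ∀ x y : A.domain, ⟪Φ (Ed x), Φ y⟫_ℂ = ⟪Φ x, Φ (Ed y)⟫_ℂ := by
    intro x y
    rw [hΦ y (Ed x), hΦ (Ed y) x, hcomm' y (x : X), hEdcoe x]
  -- construct the bounded operator T on H
  set p : Submodule ℂ H := LinearMap.range φ with hp
  have hpdense : Dense (p : Set H) := by
    apply Dense.mono _ hΦdense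
    rintro v ⟨x, rfl⟩
    exact ⟨x, rfl⟩
  set ℓ : p →ₗ[ℂ] H :=
    φ.comp (Ed.comp ((LinearEquiv.ofInjective φ hφinj).symm.toLinearMap)) with hℓ
  have hℓbound : ∀ u : p, ‖ℓ u‖ ≤ ‖E‖ * ‖(u : H)‖ := by
    intro u
    have hx : ((u : H)) = φ ((LinearEquiv.ofInjective φ hφinj).symm u) := by
      conv_lhs => rw [← (LinearEquiv.ofInjective φ hφinj).apply_symm_apply u]
      rfl
    rw [hx]
    exact hbound _
  set T₁ : p →L[ℂ] H := ℓ.mkContinuous ‖E‖ hℓbound with hT₁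
  have hdense' : DenseRange (p.subtypeL) := by
    show Dense (Set.range ((↑) : p → H))
    rw [Subtype.range_coe]
    exact hpdense
  have hui : IsUniformInducing (p.subtypeL : p →L[ℂ] H) :=
    isUniformEmbedding_subtype_val.isUniformInducing
  set T : H →L[ℂ] H := T₁.extend p.subtypeL with hT
  have hTφ : ∀ x : A.domain, T (Φ x) = Φ (Ed x) := by
    intro x
    have hmem : Φ x ∈ p := ⟨x, rfl⟩
    have h1 : Φ x = p.subtypeL ⟨Φ x, hmem⟩ := rfl
    rw [h1, ContinuousLinearMap.extend_eq _ hdense' hui]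
    show ℓ ⟨Φ x, hmem⟩ = Φ (Ed x)
    show φ (Ed ((LinearEquiv.ofInjective φ hφinj).symm ⟨Φ x, hmem⟩)) = Φ (Ed x)
    have h2 : (⟨Φ x, hmem⟩ : p) = LinearEquiv.ofInjective φ hφinj x := by
      ext; rfl
    rw [h2, LinearEquiv.symm_apply_apply]
    rfl
  have hTsym1 : ∀ (x : A.domain) (v : H), ⟪T (Φ x), v⟫_ℂ = ⟪Φ x, T v⟫_ℂ := by
    intro x
    have h1 : (fun v : H => ⟪T (Φ x), v⟫_ℂ) = fun v => ⟪Φ x, T v⟫_ℂ := by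
      apply hΦdense.equalizer
      · exact continuous_const.inner continuous_id
      · exact continuous_const.inner T.continuous
      · funext y
        simp only [Function.comp_apply]
        rw [hTφ x, hTφ y]
        exact hsymΦ x y
    exact fun v => congrFun h1 v
  have hTsym : ∀ u v : H, ⟪T u, v⟫_ℂ = ⟪u, T v⟫_ℂ := by
    intro u v
    have h1 : (fun u : H => ⟪T u, v⟫_ℂ) = fun u => ⟪u, T v⟫_ℂ := by
      apply hΦdense.equalizer
      · exact T.continuous.inner continuous_const
      · exact continuous_id.inner continuous_const
      · funext x
        simp only [Function.comp_apply]
        exact hTsym1 x v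
    exact congrFun h1 u
  -- main invariance of the domain of S
  have hJdense : Dense (J.domain : Set H) := by
    have hJd : (J.domain : Set H) = Set.range Φ := by
      ext h; exact hJdom h
    rw [hJd]
    exact hΦdense
  have hmain : ∀ y : S.domain, ∃ hy : E (y : X) ∈ S.domain,
      S ⟨E (y : X), hy⟩ = T (S y) := by
    intro y
    have hk : ∀ h : J.domain, (J h) (E (y : X)) = ⟪T (S y), (h : H)⟫_ℂ := by
      intro h
      obtain ⟨x, hx⟩ := (hJdom (h : H)).mp h.2
      have hh2 : Φ x ∈ J.domain := hx ▸ h.2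
      have hhe : h = ⟨Φ x, hh2⟩ := Subtype.ext hx.symm
      have hmemEd : Φ (Ed x) ∈ J.domain := (hJdom _).mpr ⟨Ed x, rfl⟩
      calc (J h) (E (y : X)) = (A x) (E (y : X)) := by rw [hhe, hJval x hh2]
      _ = (A (Ed x)) ((y : X)) := (hcomm' x ((y : X))).symm
      _ = (J ⟨Φ (Ed x), hmemEd⟩) ((y : X)) := by rw [hJval (Ed x) hmemEd]
      _ = ⟪S y, Φ (Ed x)⟫_ℂ := hSval y ⟨Φ (Ed x), hmemEd⟩
      _ = ⟪S y, T (Φ x)⟫_ℂ := by rw [hTφ x]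
      _ = ⟪T (S y), Φ x⟫_ℂ := (hTsym (S y) (Φ x)).symm
      _ = ⟪T (S y), (h : H)⟫_ℂ := by rw [hhe]
    have hy : E (y : X) ∈ S.domain := (hSdom _).mpr ⟨T (S y), hk⟩
    refine ⟨hy, ?_⟩
    have hdiff : S ⟨E (y : X), hy⟩ - T (S y) = 0 := by
      apply inner_zero_of_dense hJdense
      rintro v hv
      have h1 := hSval ⟨E (y : X), hy⟩ ⟨v, hv⟩
      rw [inner_sub_left, ← h1, hk ⟨v, hv⟩, sub_self]
    exact sub_eq_zero.mp hdiff
  choose hmem heq using hmain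
  refine ⟨fun y => ⟨E (y : X), hmem y⟩, fun y => rfl, ?_⟩
  intro y z
  rw [heq y, heq z]
  exact hTsym (S y) (S z)

/-- A, B positive self-adjoint operators from X to X* with positive
lower bounds; C = A ∔ B their form sum (the self-adjoint operator associated to the
closed form t_A + t_B on dom J_A* ∩ dom J_B*); E a bounded operator on X with
E* A ⊆ A E, E (dom A) ⊆ dom A, E* B ⊆ B E, E (dom B) ⊆ dom B.  Then
E* (A ∔ B) ⊆ (A ∔ B) E: for every z ∈ dom (A ∔ B) one has E z ∈ dom (A ∔ B) and
E* ((A ∔ B) z) = (A ∔ B) (E z). -/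
theorem statement18
    {X : Type*} [NormedAddCommGroup X] [NormedSpace ℂ X] [CompleteSpace X]
    {HA : Type*} [NormedAddCommGroup HA] [InnerProductSpace ℂ HA] [CompleteSpace HA]
    {HB : Type*} [NormedAddCommGroup HB] [InnerProductSpace ℂ HB] [CompleteSpace HB]
    (A : X →ₗ.[ℂ] CDual X) (hsaA : IsSelfAdjointOp A)
    (B : X →ₗ.[ℂ] CDual X) (hsaB : IsSelfAdjointOp B)
    (γA γB : ℝ) (hγA : 0 < γA) (hγB : 0 < γB)
    (hlbA : ∀ x : A.domain, (↑(γA * ‖(x : X)‖ ^ 2) : ℂ) ≤ A x (x : X))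
    (hlbB : ∀ x : B.domain, (↑(γB * ‖(x : X)‖ ^ 2) : ℂ) ≤ B x (x : X))
    (ΦA : A.domain → HA) (hΦAdense : DenseRange ΦA)
    (hΦA : ∀ x y : A.domain, ⟪ΦA y, ΦA x⟫_ℂ = A x (y : X))
    (JA : HA →ₗ.[ℂ] CDual X)
    (hJAdom : ∀ h : HA, h ∈ JA.domain ↔ h ∈ Set.range ΦA)
    (hJAval : ∀ (x : A.domain) (hh : ΦA x ∈ JA.domain), JA ⟨ΦA x, hh⟩ = A x)
    (SA : X →ₗ.[ℂ] HA)
    (hSAdom : ∀ y : X, y ∈ SA.domain ↔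
      ∃ k : HA, ∀ h : JA.domain, JA h y = ⟪k, (h : HA)⟫_ℂ)
    (hSAval : ∀ (y : SA.domain) (h : JA.domain), JA h (y : X) = ⟪SA y, (h : HA)⟫_ℂ)
    (ΦB : B.domain → HB) (hΦBdense : DenseRange ΦB)
    (hΦB : ∀ x y : B.domain, ⟪ΦB y, ΦB x⟫_ℂ = B x (y : X))
    (JB : HB →ₗ.[ℂ] CDual X)
    (hJBdom : ∀ h : HB, h ∈ JB.domain ↔ h ∈ Set.range ΦB)
    (hJBval : ∀ (x : B.domain) (hh : ΦB x ∈ JB.domain), JB ⟨ΦB x, hh⟩ = B x)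
    (SB : X →ₗ.[ℂ] HB)
    (hSBdom : ∀ y : X, y ∈ SB.domain ↔
      ∃ k : HB, ∀ h : JB.domain, JB h y = ⟪k, (h : HB)⟫_ℂ)
    (hSBval : ∀ (y : SB.domain) (h : JB.domain), JB h (y : X) = ⟪SB y, (h : HB)⟫_ℂ)
    (hdense : Dense ((SA.domain : Set X) ∩ (SB.domain : Set X)))
    (C : X →ₗ.[ℂ] CDual X)
    (hCdom : ∀ x : X, x ∈ C.domain ↔
      ∃ (hxA : x ∈ SA.domain) (hxB : x ∈ SB.domain) (z : CDual X),
        ∀ (y : X) (hyA : y ∈ SA.domain) (hyB : y ∈ SB.domain),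
          z y = ⟪SA ⟨y, hyA⟩, SA ⟨x, hxA⟩⟫_ℂ + ⟪SB ⟨y, hyB⟩, SB ⟨x, hxB⟩⟫_ℂ)
    (hCval : ∀ (x : C.domain) (hxA : (x : X) ∈ SA.domain) (hxB : (x : X) ∈ SB.domain)
      (y : X) (hyA : y ∈ SA.domain) (hyB : y ∈ SB.domain),
        C x y = ⟪SA ⟨y, hyA⟩, SA ⟨(x : X), hxA⟩⟫_ℂ + ⟪SB ⟨y, hyB⟩, SB ⟨(x : X), hxB⟩⟫_ℂ)
    (E : X →L[ℂ] X)
    (hinvA : ∀ x : A.domain, E (x : X) ∈ A.domain)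
    (hcommA : ∀ (x : A.domain) (y : X), A x (E y) = A ⟨E (x : X), hinvA x⟩ y)
    (hinvB : ∀ x : B.domain, E (x : X) ∈ B.domain)
    (hcommB : ∀ (x : B.domain) (y : X), B x (E y) = B ⟨E (x : X), hinvB x⟩ y) :
    ∀ z : C.domain, ∃ hz : E (z : X) ∈ C.domain,
      ∀ y : X, C z (E y) = C ⟨E (z : X), hz⟩ y := by
  classical
  obtain ⟨hdA, hsymA, _⟩ := hsaA
  obtain ⟨hdB, hsymB, _⟩ := hsaB
  obtain ⟨gA, hgAcoe, hgAsym⟩ := aux_key A γA hγA hlbA ΦA hΦAdense hΦA JA hJAdom hJAval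
    SA hSAdom hSAval E hinvA hcommA
  obtain ⟨gB, hgBcoe, hgBsym⟩ := aux_key B γB hγB hlbB ΦB hΦBdense hΦB JB hJBdom hJBval
    SB hSBdom hSBval E hinvB hcommB
  intro z
  obtain ⟨hzA, hzB, w, hw⟩ := (hCdom (z : X)).mp z.2
  have hEzA : E (z : X) ∈ SA.domain := by
    have h := hgAcoe ⟨(z : X), hzA⟩
    rw [← h]; exact (gA ⟨(z : X), hzA⟩).2
  have hEzB : E (z : X) ∈ SB.domain := by
    have h := hgBcoe ⟨(z : X), hzB⟩
    rw [← h]; exact (gB ⟨(z : X), hzB⟩).2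
  have hkey : ∀ (y : X) (hyA : y ∈ SA.domain) (hyB : y ∈ SB.domain),
      (C z) (E y) = ⟪SA ⟨y, hyA⟩, SA ⟨E (z : X), hEzA⟩⟫_ℂ
        + ⟪SB ⟨y, hyB⟩, SB ⟨E (z : X), hEzB⟩⟫_ℂ := by
    intro y hyA hyB
    have hEyA : E y ∈ SA.domain := by
      have h := hgAcoe ⟨y, hyA⟩
      rw [← h]; exact (gA ⟨y, hyA⟩).2
    have hEyB : E y ∈ SB.domain := by
      have h := hgBcoe ⟨y, hyB⟩
      rw [← h]; exact (gB ⟨y, hyB⟩).2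
    have h1 := hCval z hzA hzB (E y) hEyA hEyB
    rw [h1]
    have e1 : (⟨E y, hEyA⟩ : SA.domain) = gA ⟨y, hyA⟩ := Subtype.ext ((hgAcoe ⟨y, hyA⟩).symm)
    have e2 : (⟨E (z : X), hEzA⟩ : SA.domain) = gA ⟨(z : X), hzA⟩ :=
      Subtype.ext ((hgAcoe ⟨(z : X), hzA⟩).symm)
    have e3 : (⟨E y, hEyB⟩ : SB.domain) = gB ⟨y, hyB⟩ := Subtype.ext ((hgBcoe ⟨y, hyB⟩).symm)
    have e4 : (⟨E (z : X), hEzB⟩ : SB.domain) = gB ⟨(z : X), hzB⟩ :=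
      Subtype.ext ((hgBcoe ⟨(z : X), hzB⟩).symm)
    rw [e1, e3, hgAsym ⟨y, hyA⟩ ⟨(z : X), hzA⟩, hgBsym ⟨y, hyB⟩ ⟨(z : X), hzB⟩, e2, e4]
  have hz : E (z : X) ∈ C.domain := by
    rw [hCdom]
    refine ⟨hEzA, hEzB, (C z).comp E, ?_⟩
    intro y hyA hyB
    exact hkey y hyA hyB
  refine ⟨hz, ?_⟩
  intro y
  have hfun : (fun y : X => (C z) (E y)) = fun y : X => (C ⟨E (z : X), hz⟩) y := by
    apply Continuous.ext_on hdense
    · exact (C z).continuous.comp E.continuous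
    · exact (C ⟨E (z : X), hz⟩).continuous
    · rintro v ⟨hvA, hvB⟩
      show (C z) (E v) = (C ⟨E (z : X), hz⟩) v
      rw [hkey v hvA hvB, hCval ⟨E (z : X), hz⟩ hEzA hEzB v hvA hvB]
  exact congrFun hfun y
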